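/- Theorem 5.3 (tradeoff between payments and accuracy). Fix a mechanism M on n players and privacy loss functions λ_1, …, λ_n that respect indifference and are growing with statistical distance for monotonic neighbors. Suppose M is individually rational; M is truthful for every input (b,v) and player i with v_i = 0; and there is a finite P ≥ 0 such that Pay_i(b,v) ≤ P for every player i and every input (b,v) with v_i = 0. Then for all τ, γ, η > 0 with η + 2γ ≤ 1 (and ηn, γn integers), and every β < 1/2 − (P/τ)·γn, the mechanism M is NOT ([η + γ, γ], β)-accurate on all inputs in which at most an η fraction of the players have valuation exceeding τ; i.e., there exists an input (b,v) with |{i : v_i > τ}| ≤ ηn on which M fails ([η + γ, γ], β)-accuracy. -/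

import Mathlib

open MeasureTheory
open scoped ENNReal

noncomputable section

attribute [local instance] Classical.propDecidable

/-- Expectation of a real-valued function under a `PMF`. -/
def PMF.expect {α : Type*} [MeasurableSpace α] (p : PMF α) (f : α → ℝ) : ℝ :=
  ∫ x, f x ∂p.toMeasure

/-- Total variation (statistical) distance between two distributions:
`Δ(p,q) = sup_S |p(S) - q(S)|`. -/
def tvDist {α : Type*} (p q : PMF α) : ℝ :=
  ⨆ S : Set α, |(p.toOuterMeasure S).toReal - (q.toOuterMeasure S).toReal|

/-- A mechanism on `n` players: a randomized function producing an integer output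
(an estimate of the sum of the data bits) together with payments to the `n` players. -/
structure Mech (n : ℕ) where
  run : (Fin n → Bool) → (Fin n → ℝ) → PMF (ℤ × (Fin n → ℝ))

namespace Mech

variable {n : ℕ}

/-- The output part `M_out`. -/
def out (M : Mech n) (b : Fin n → Bool) (v : Fin n → ℝ) : PMF ℤ :=
  (M.run b v).map Prod.fst

/-- The payment part `M_pay`. -/
def payPMF (M : Mech n) (b : Fin n → Bool) (v : Fin n → ℝ) : PMF (Fin n → ℝ) :=
  (M.run b v).map Prod.snd

/-- `Pay_i(b,v)`: the expected payment to player `i`. -/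
def pay (M : Mech n) (b : Fin n → Bool) (v : Fin n → ℝ) (i : Fin n) : ℝ :=
  (M.payPMF b v).expect (fun p => p i)

/-- `M_{-i}`: the output together with the payments to all players other than `i`. -/
def minus (M : Mech n) (i : Fin n) (b : Fin n → Bool) (v : Fin n → ℝ) :
    PMF (ℤ × ({j : Fin n // j ≠ i} → ℝ)) :=
  (M.run b v).map (fun sp => (sp.1, fun j => sp.2 j.1))

end Mech

/-- The type of privacy loss functions `λ_i(b, v, v'_i, s, p_{-i})` for player `i`. -/
abbrev LossFn (n : ℕ) (i : Fin n) : Type :=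
  (Fin n → Bool) → (Fin n → ℝ) → ℝ → ℤ → ({j : Fin n // j ≠ i} → ℝ) → ℝ

/-- `Loss_i(b, v, v'_i)`: the expected privacy loss of player `i` with true types `(b,v)`
and declaration `v'_i`. -/
def lossOf {n : ℕ} (M : Mech n) {i : Fin n} (lam : LossFn n i)
    (b : Fin n → Bool) (v : Fin n → ℝ) (v'i : ℝ) : ℝ :=
  (M.run b (Function.update v i v'i)).expect
    (fun sp => lam b v v'i sp.1 (fun j => sp.2 j.1))

/-- `i`-neighbors: inputs agreeing in all coordinates `j ≠ i`. -/
def iNeighbor {n : ℕ} (i : Fin n) (x y : (Fin n → Bool) × (Fin n → ℝ)) : Prop :=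
  ∀ j, j ≠ i → x.1 j = y.1 j ∧ x.2 j = y.2 j

/-- Neighbors: `i`-neighbors for some `i`. -/
def Neighbor {n : ℕ} (x y : (Fin n → Bool) × (Fin n → ℝ)) : Prop :=
  ∃ i, iNeighbor i x y

/-- Monotonically related player types. -/
def monRelated (t t' : Bool × ℝ) : Prop :=
  (t.1 = false ∧ t'.1 = true ∧ t.2 ≤ t'.2) ∨ (t.1 = true ∧ t'.1 = false ∧ t'.2 ≤ t.2)

/-- Monotonic `i`-neighbors. -/
def monINeighbor {n : ℕ} (i : Fin n) (x y : (Fin n → Bool) × (Fin n → ℝ)) : Prop :=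
  iNeighbor i x y ∧ monRelated (x.1 i, x.2 i) (y.1 i, y.2 i)

/-- `(b,v)` is `δ`-distinguishable for player `i` with respect to `f`. -/
def distinguishable {n : ℕ} {α : Type*} (δ : ℝ)
    (f : (Fin n → Bool) → (Fin n → ℝ) → PMF α) (i : Fin n)
    (b : Fin n → Bool) (v : Fin n → ℝ) : Prop :=
  ∃ y : (Fin n → Bool) × (Fin n → ℝ), iNeighbor i (b, v) y ∧ δ ≤ tvDist (f b v) (f y.1 y.2)

/-- `(b,v)` is `δ`-monotonically distinguishable for player `i` with respect to `f`. -/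
def monDistinguishable {n : ℕ} {α : Type*} (δ : ℝ)
    (f : (Fin n → Bool) → (Fin n → ℝ) → PMF α) (i : Fin n)
    (b : Fin n → Bool) (v : Fin n → ℝ) : Prop :=
  ∃ y : (Fin n → Bool) × (Fin n → ℝ), monINeighbor i (b, v) y ∧ δ ≤ tvDist (f b v) (f y.1 y.2)

/-- `λ_i` respects indifference. -/
def respectsIndifference {n : ℕ} (M : Mech n) {i : Fin n} (lam : LossFn n i) : Prop :=
  ∀ b v, v i = 0 → ∀ v' v'', lossOf M lam b v v' = lossOf M lam b v v''

/-- `λ_i` is increasing for `δ`-distinguishability. -/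
def increasingFor {n : ℕ} (M : Mech n) {i : Fin n} (lam : LossFn n i) (δ : ℝ) : Prop :=
  ∃ T : ℝ → (Fin n → Bool) → ({j : Fin n // j ≠ i} → ℝ) → ℝ,
    ∀ ℓ, 0 < ℓ → ∀ (b : Fin n → Bool) (v : Fin n → ℝ),
      T ℓ b (fun j => v j.1) ≤ v i →
      distinguishable δ M.out i b v →
      ℓ < lossOf M lam b v (v i)

/-- `λ_i` is increasing for `δ`-monotonic distinguishability. -/
def increasingForMon {n : ℕ} (M : Mech n) {i : Fin n} (lam : LossFn n i) (δ : ℝ) : Prop :=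
  ∃ T : ℝ → (Fin n → Bool) → ({j : Fin n // j ≠ i} → ℝ) → ℝ,
    ∀ ℓ, 0 < ℓ → ∀ (b : Fin n → Bool) (v : Fin n → ℝ),
      T ℓ b (fun j => v j.1) ≤ v i →
      monDistinguishable δ M.out i b v →
      ℓ < lossOf M lam b v (v i)

/-- `M` is individually rational. -/
def indivRational {n : ℕ} (M : Mech n) (lam : ∀ i : Fin n, LossFn n i) : Prop :=
  ∀ b v i, lossOf M (lam i) b v (v i) ≤ M.pay b v i

/-- `M` is truthful for input `(b,v)` and player `i`. -/
def truthfulAt {n : ℕ} (M : Mech n) {i : Fin n} (lam : LossFn n i)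
    (b : Fin n → Bool) (v : Fin n → ℝ) : Prop :=
  ∀ v'i : ℝ,
    M.pay b (Function.update v i v'i) i - lossOf M lam b v v'i ≤
      M.pay b v i - lossOf M lam b v (v i)

/-- The average `b̄` of the data bits. -/
def bbar {n : ℕ} (b : Fin n → Bool) : ℝ := (∑ i, if b i then (1 : ℝ) else 0) / n

/-- `M` is `([a, a'], β)`-accurate on input `(b,v)`. -/
def accurate {n : ℕ} (M : Mech n) (a a' β : ℝ) (b : Fin n → Bool) (v : Fin n → ℝ) : Prop :=
  ((M.out b v).toOuterMeasure
      {s : ℤ | ¬((bbar b - a) * n < (s : ℝ) ∧ (s : ℝ) < (bbar b + a') * n)}).toReal ≤ β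

/-- `G` is the symmetric geometric distribution `Geom(ε)` on `ℤ`, with
`Pr[X = k] = (1-e^{-ε})/(1+e^{-ε}) · e^{-ε|k|}`. -/
def isGeom (ε : ℝ) (G : PMF ℤ) : Prop :=
  ∀ k : ℤ, G k =
    ENNReal.ofReal ((1 - Real.exp (-ε)) / (1 + Real.exp (-ε)) * Real.exp (-ε * |(k : ℝ)|))

/-- The monotonic-valuations mechanism `M_{B,ε}` (Algorithm 1): data bits of players with
`2εv_i > B/n` are treated as 0, the output is the resulting sum plus `Geom(ε)` noise, and
each player with `2εv_i ≤ B/n` is paid `B/n` (others are paid nothing). -/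
def monMech (n : ℕ) (B ε : ℝ) (G : PMF ℤ) : Mech n where
  run b v := G.map (fun x =>
    ((∑ i, if b i = true ∧ 2 * ε * v i ≤ B / n then (1 : ℤ) else 0) + x,
      fun i => if 2 * ε * v i ≤ B / n then B / n else 0))

/-- The modified mechanism `M'` of Theorem 4.3: identical to `M_{B,ε}` except that all
players with data bit 0 are paid `B/n`, even those with large privacy valuations. -/
def monMech' (n : ℕ) (B ε : ℝ) (G : PMF ℤ) : Mech n where
  run b v := G.map (fun x =>
    ((∑ i, if b i = true ∧ 2 * ε * v i ≤ B / n then (1 : ℤ) else 0) + x,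
      fun i => if 2 * ε * v i ≤ B / n ∨ b i = false then B / n else 0))

/-- The log-ratio of point probabilities of `M_{-i}` between `(b,v)` and the input where
player `i`'s type is replaced by `(b''_i, v''_i)`. -/
def logRatio {n : ℕ} (M : Mech n) (i : Fin n) (b : Fin n → Bool) (v : Fin n → ℝ)
    (b''i : Bool) (v''i : ℝ) (s : ℤ) (p : {j : Fin n // j ≠ i} → ℝ) : ℝ :=
  Real.log ((M.minus i b v (s, p)).toReal /
    (M.minus i (Function.update b i b''i) (Function.update v i v''i) (s, p)).toReal)

/-- `λ_i` is bounded by differential privacy for monotonic valuations. -/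
def boundedByDPMon {n : ℕ} (M : Mech n) {i : Fin n} (lam : LossFn n i) : Prop :=
  ∀ b v v'i s p,
    |lam b v v'i s p| ≤
      v i * ⨆ t : {t : Bool × ℝ // monRelated (b i, v i) t},
        logRatio M i b v t.1.1 t.1.2 s p

/-- `λ_i` respects identical output distributions. -/
def respectsIdentical {n : ℕ} (M : Mech n) {i : Fin n} (lam : LossFn n i) : Prop :=
  ∀ b v v'i, M.minus i b v = M.minus i b (Function.update v i v'i) →
    ∀ s p, lam b v v'i s p = lam b v (v i) s p

/-- `λ_i` is growing with statistical distance for monotonic neighbors. -/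
def growingMon {n : ℕ} (M : Mech n) {i : Fin n} (lam : LossFn n i) : Prop :=
  ∀ b v y, monINeighbor i (b, v) y →
    v i * tvDist (M.out b v) (M.out y.1 y.2) ≤ lossOf M lam b v (v i)


section AuxTradeoff

lemma pmf_om_le_one {α : Type*} (p : PMF α) (S : Set α) : p.toOuterMeasure S ≤ 1 := by
  calc p.toOuterMeasure S ≤ p.toOuterMeasure Set.univ :=
        p.toOuterMeasure.mono (Set.subset_univ S)
    _ = 1 := (p.toOuterMeasure_apply_eq_one_iff _).2 (Set.subset_univ _)

lemma tvDist_bdd {α : Type*} (p q : PMF α) :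
    BddAbove (Set.range fun S : Set α =>
      |(p.toOuterMeasure S).toReal - (q.toOuterMeasure S).toReal|) := by
  refine ⟨1, ?_⟩
  rintro x ⟨S, rfl⟩
  have h1 : (p.toOuterMeasure S).toReal ≤ 1 := by
    simpa using ENNReal.toReal_mono (by norm_num) (pmf_om_le_one p S)
  have h2 : (q.toOuterMeasure S).toReal ≤ 1 := by
    simpa using ENNReal.toReal_mono (by norm_num) (pmf_om_le_one q S)
  have h3 : (0:ℝ) ≤ (p.toOuterMeasure S).toReal := ENNReal.toReal_nonneg
  have h4 : (0:ℝ) ≤ (q.toOuterMeasure S).toReal := ENNReal.toReal_nonneg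
  rw [abs_sub_le_iff]; constructor <;> linarith

lemma le_tvDist {α : Type*} (p q : PMF α) (S : Set α) :
    |(p.toOuterMeasure S).toReal - (q.toOuterMeasure S).toReal| ≤ tvDist p q :=
  le_ciSup (tvDist_bdd p q) S

lemma tvDist_self {α : Type*} (p : PMF α) : tvDist p p = 0 := by
  unfold tvDist; simp

lemma tvDist_triangle {α : Type*} (p q r : PMF α) :
    tvDist p r ≤ tvDist p q + tvDist q r := by
  refine ciSup_le fun S => ?_
  calc |(p.toOuterMeasure S).toReal - (r.toOuterMeasure S).toReal|
      ≤ |(p.toOuterMeasure S).toReal - (q.toOuterMeasure S).toReal| +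
        |(q.toOuterMeasure S).toReal - (r.toOuterMeasure S).toReal| := abs_sub_le _ _ _
    _ ≤ tvDist p q + tvDist q r := add_le_add (le_tvDist p q S) (le_tvDist q r S)

lemma tvDist_telescope {α : Type*} (f : ℕ → PMF α) (m : ℕ) :
    tvDist (f 0) (f m) ≤ ∑ k ∈ Finset.range m, tvDist (f k) (f (k+1)) := by
  induction m with
  | zero => simp [tvDist_self]
  | succ m ih =>
      rw [Finset.sum_range_succ]
      exact le_trans (tvDist_triangle (f 0) (f m) (f (m+1))) (by linarith)

lemma pmf_compl (p : PMF ℤ) (S : Set ℤ) :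
    (p.toOuterMeasure S).toReal = 1 - (p.toOuterMeasure Sᶜ).toReal := by
  have hS : MeasurableSet S := trivial
  have h1 : p.toMeasure S + p.toMeasure Sᶜ = 1 := prob_add_prob_compl hS
  have h2 : p.toMeasure S ≠ ⊤ := measure_ne_top _ _
  have h3 : p.toMeasure Sᶜ ≠ ⊤ := measure_ne_top _ _
  have h4 : (p.toMeasure S).toReal + (p.toMeasure Sᶜ).toReal = 1 := by
    rw [← ENNReal.toReal_add h2 h3, h1]; simp
  rw [PMF.toMeasure_apply_eq_toOuterMeasure_apply (hs := hS),
    PMF.toMeasure_apply_eq_toOuterMeasure_apply (hs := hS.compl)] at h4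
  linarith

end AuxTradeoff

/-- **Theorem 5.3 (tradeoff between payments and accuracy).** Here `η = h/n` and
`γ = g/n` for positive integers `h, g`. -/
theorem payment_accuracy_tradeoff (n : ℕ) (hn : 1 ≤ n) (M : Mech n)
    (lam : ∀ i : Fin n, LossFn n i)
    (hindiff : ∀ i : Fin n, respectsIndifference M (lam i))
    (hgrow : ∀ i : Fin n, growingMon M (lam i))
    (hIR : indivRational M lam)
    (htruth : ∀ (b : Fin n → Bool) (v : Fin n → ℝ) (i : Fin n), v i = 0 →
      truthfulAt M (lam i) b v)
    (P : ℝ) (hP0 : 0 ≤ P)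
    (hPmax : ∀ (b : Fin n → Bool) (v : Fin n → ℝ) (i : Fin n), v i = 0 →
      M.pay b v i ≤ P)
    (τ : ℝ) (hτ : 0 < τ) (h g : ℕ) (hh : 0 < h) (hg : 0 < g)
    (hsum : (h : ℝ) + 2 * g ≤ n)
    (β : ℝ) (hβ : β < 1 / 2 - P / τ * g) :
    ∃ (b : Fin n → Bool) (v : Fin n → ℝ),
      (Finset.univ.filter (fun i : Fin n => τ < v i)).card ≤ h ∧
      ¬ accurate M (((h : ℝ) + g) / n) ((g : ℝ) / n) β b v := by
  by_contra hcon
  push_neg at hcon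
  have hn0 : (0:ℝ) < n := by exact_mod_cast hn
  have hn0' : (n:ℝ) ≠ 0 := ne_of_gt hn0
  -- all payments are bounded by P
  have hpay : ∀ (b : Fin n → Bool) (v : Fin n → ℝ) (i : Fin n), M.pay b v i ≤ P := by
    intro b v i
    set w := Function.update v i 0 with hw
    have hw0 : w i = 0 := Function.update_self i 0 v
    have ht := htruth b w i hw0 (v i)
    have hupd : Function.update w i (v i) = v := by
      rw [hw, Function.update_idem, Function.update_eq_self]
    have hl := hindiff i b w hw0 (v i) (w i)
    rw [hupd, hl] at ht
    have := hPmax b w i hw0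
    linarith
  -- numeric setup
  have hβ' : β < 1 / 2 - (g:ℝ) * (P/τ) := by
    have : (P:ℝ)/τ * g = (g:ℝ) * (P/τ) := by ring
    linarith [hβ, this.symm.le, this.le]
  set ε : ℝ := 1 - 2*β - 2*((g:ℝ)*(P/τ)) with hε
  have hε0 : 0 < ε := by rw [hε]; linarith
  set K : ℝ := τ + 1 + 2*(h:ℝ)*P/ε with hK
  have hτK : τ < K := by
    have h2 : 0 ≤ 2*(h:ℝ)*P/ε := div_nonneg (by positivity) hε0.le
    rw [hK]; linarith
  have hKpos : 0 < K := lt_trans hτ hτK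
  have hhPK : (h:ℝ)*(P/K) ≤ ε/2 := by
    rw [← mul_div_assoc, div_le_iff₀ hKpos]
    have hKe : ε/2*K = ε*(τ+1)/2 + (h:ℝ)*P := by
      rw [hK]; field_simp
    rw [hKe]
    nlinarith [mul_nonneg hε0.le (by linarith : (0:ℝ) ≤ τ+1)]
  -- the valuations
  set v : Fin n → ℝ := fun i => if (i:ℕ) < h then K else τ with hv
  have hvpos : ∀ i, 0 < v i := by
    intro i; rw [hv]; dsimp only; split
    · exact hKpos
    · exact hτ
  have hcount : (Finset.univ.filter (fun i : Fin n => τ < v i)).card ≤ h := by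
    have hsub : ∀ i ∈ Finset.univ.filter (fun i : Fin n => τ < v i),
        (i:ℕ) ∈ Finset.range h := by
      intro i hi
      rw [Finset.mem_filter] at hi
      rw [Finset.mem_range]
      by_contra hih
      have : v i = τ := by rw [hv]; dsimp only; rw [if_neg hih]
      rw [this] at hi
      exact lt_irrefl τ hi.2
    calc (Finset.univ.filter (fun i : Fin n => τ < v i)).card
        ≤ (Finset.range h).card :=
          Finset.card_le_card_of_injOn (fun i => (i:ℕ)) hsub (Fin.val_injective.injOn)
      _ = h := Finset.card_range h
  -- the hybrid inputs
  have hmn : h + 2*g ≤ n := by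
    have : ((h + 2*g : ℕ):ℝ) ≤ (n:ℝ) := by push_cast; linarith
    exact_mod_cast this
  set m := h + 2*g with hmdef
  set bits : ℕ → Fin n → Bool := fun k i => decide ((i:ℕ) < k) with hbits
  -- step bound
  have hstep : ∀ k ∈ Finset.range m,
      tvDist (M.out (bits k) v) (M.out (bits (k+1)) v) ≤ if k < h then P/K else P/τ := by
    intro k hk
    rw [Finset.mem_range] at hk
    have hkn : k < n := lt_of_lt_of_le hk hmn
    set i : Fin n := ⟨k, hkn⟩ with hidef
    have hmon : monINeighbor i (bits k, v) (bits (k+1), v) := by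
      constructor
      · intro j hj
        refine ⟨?_, rfl⟩
        have hjk : (j:ℕ) ≠ k := fun hjk => hj (Fin.ext hjk)
        simp only [hbits]
        exact decide_eq_decide.2 (by omega)
      · left
        refine ⟨?_, ?_, le_refl _⟩
        · simp [hbits, hidef]
        · simp [hbits, hidef]
    have hg1 := hgrow i (bits k) v (bits (k+1), v) hmon
    have hg2 := hIR (bits k) v i
    have hg3 := hpay (bits k) v i
    have hΔ : v i * tvDist (M.out (bits k) v) (M.out (bits (k+1)) v) ≤ P := by
      exact le_trans hg1 (le_trans hg2 hg3)
    have hvi : v i = if k < h then K else τ := by rw [hv]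
    have htv : tvDist (M.out (bits k) v) (M.out (bits (k+1)) v) ≤ P / v i := by
      rw [le_div_iff₀ (hvpos i)]
      linarith [hΔ]
    rw [hvi] at htv
    split at htv <;> split <;> first | assumption | omega
  -- sum bound
  have hsumb : ∑ k ∈ Finset.range m, tvDist (M.out (bits k) v) (M.out (bits (k+1)) v)
      ≤ (h:ℝ)*(P/K) + 2*(g:ℝ)*(P/τ) := by
    have h1 : (Finset.range m).filter (fun k => k < h) = Finset.range h := by
      ext k
      simp only [Finset.mem_filter, Finset.mem_range, hmdef]
      omega
    have h2 : (Finset.range m).filter (fun k => ¬ k < h) = Finset.Ico h m := by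
      ext k
      simp only [Finset.mem_filter, Finset.mem_range, Finset.mem_Ico]
      omega
    calc ∑ k ∈ Finset.range m, tvDist (M.out (bits k) v) (M.out (bits (k+1)) v)
        ≤ ∑ k ∈ Finset.range m, (if k < h then P/K else P/τ) :=
          Finset.sum_le_sum hstep
      _ = (h:ℝ)*(P/K) + 2*(g:ℝ)*(P/τ) := by
          rw [Finset.sum_ite, Finset.sum_const, Finset.sum_const, h1, h2,
            Finset.card_range, Nat.card_Ico]
          have : m - h = 2*g := by omega
          rw [this]
          push_cast
          ring
  -- total variation between endpoints
  have htel := tvDist_telescope (fun k => M.out (bits k) v) m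
  -- bbar computations
  have hbbar0 : bbar (bits 0) = 0 := by
    unfold bbar
    simp [hbits]
  have hsummand : ∀ (k : ℕ) (i : Fin n),
      (if bits k i then (1:ℝ) else 0) = (if (i:ℕ) < k then (1:ℝ) else 0) := by
    intro k i
    simp [hbits]
  have hrange : ∀ k : ℕ, k ≤ n → ∑ i : Fin n, (if bits k i then (1:ℝ) else 0) = k := by
    intro k hkn
    have e1 : ∑ i : Fin n, (if bits k i then (1:ℝ) else 0)
        = ∑ i : Fin n, (fun j : ℕ => if j < k then (1:ℝ) else 0) (i:ℕ) := by
      refine Finset.sum_congr rfl fun i _ => ?_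
      exact hsummand k i
    rw [e1, Fin.sum_univ_eq_sum_range (fun j => if j < k then (1:ℝ) else 0) n]
    rw [← Finset.sum_filter]
    have : (Finset.range n).filter (fun j => j < k) = Finset.range k := by
      ext j
      simp only [Finset.mem_filter, Finset.mem_range]
      omega
    rw [this, Finset.sum_const, Finset.card_range]
    simp
  have hbbarm : bbar (bits m) = (m:ℝ) / n := by
    unfold bbar
    rw [hrange m hmn]
  -- the distinguishing set
  set S : Set ℤ := {s : ℤ | -((h:ℝ)+g) < (s:ℝ) ∧ (s:ℝ) < g} with hS
  have acc0 := hcon (bits 0) v hcount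
  have accm := hcon (bits m) v hcount
  unfold accurate at acc0 accm
  have e01 : (bbar (bits 0) - ((h:ℝ)+g)/n) * n = -((h:ℝ)+g) := by
    rw [hbbar0]; field_simp; ring
  have e02 : (bbar (bits 0) + (g:ℝ)/n) * n = (g:ℝ) := by
    rw [hbbar0]; field_simp; ring
  have em1 : (bbar (bits m) - ((h:ℝ)+g)/n) * n = (g:ℝ) := by
    rw [hbbarm]; field_simp; push_cast [hmdef]; ring
  have em2 : (bbar (bits m) + (g:ℝ)/n) * n = (m:ℝ) + g := by
    rw [hbbarm]; field_simp
  rw [e01, e02] at acc0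
  rw [em1, em2] at accm
  have hcompl : {s : ℤ | ¬(-((h:ℝ)+g) < (s:ℝ) ∧ (s:ℝ) < (g:ℝ))} = Sᶜ := by
    ext s
    simp [hS]
  rw [hcompl] at acc0
  have l0 : 1 - β ≤ ((M.out (bits 0) v).toOuterMeasure S).toReal := by
    rw [pmf_compl]
    linarith
  have hsubm : S ⊆ {s : ℤ | ¬((g:ℝ) < (s:ℝ) ∧ (s:ℝ) < (m:ℝ) + g)} := by
    intro s hs
    rw [hS] at hs
    intro hc
    exact absurd hc.1 (by linarith [hs.2])
  have lm : ((M.out (bits m) v).toOuterMeasure S).toReal ≤ β := by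
    refine le_trans ?_ accm
    refine ENNReal.toReal_mono ?_ ((M.out (bits m) v).toOuterMeasure.mono hsubm)
    exact ((pmf_om_le_one _ _).trans_lt ENNReal.one_lt_top).ne
  have hlow : 1 - 2*β ≤ tvDist (M.out (bits 0) v) (M.out (bits m) v) := by
    refine le_trans ?_ (le_tvDist (M.out (bits 0) v) (M.out (bits m) v) S)
    refine le_trans ?_ (le_abs_self _)
    linarith
  have hfinal : tvDist (M.out (bits 0) v) (M.out (bits m) v)
      ≤ (h:ℝ)*(P/K) + 2*(g:ℝ)*(P/τ) := le_trans htel hsumb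
  have : 1 - 2*β ≤ ε/2 + 2*((g:ℝ)*(P/τ)) := by
    calc 1 - 2*β ≤ (h:ℝ)*(P/K) + 2*(g:ℝ)*(P/τ) := le_trans hlow hfinal
      _ ≤ ε/2 + 2*((g:ℝ)*(P/τ)) := by linarith [hhPK]
  rw [hε] at this
  linarith
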